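/- In PGL₂(ℤ), the subgroup generated by γ₁ = [[-1,2],[-1,1]], γ₂ = [[1,-1],[2,-1]], γ₃ = [[0,1],[-1,0]] equals Γ³, the subgroup of PSL₂(ℤ) generated by cubes of all elements. In particular, γ₁γ₂γ₃ = [[1,3],[0,1]] and each γᵢ has order 2 in PSL₂(ℤ). -/

import Mathlib

open Matrix

abbrev SL2Z := Matrix.SpecialLinearGroup (Fin 2) ℤ
abbrev PSL2Z := SL2Z ⧸ Subgroup.center SL2Z

def γ₁ : SL2Z := ⟨!![-1, 2; -1, 1], by norm_num [Matrix.det_fin_two_of]⟩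
def γ₂ : SL2Z := ⟨!![1, -1; 2, -1], by norm_num [Matrix.det_fin_two_of]⟩
def γ₃ : SL2Z := ⟨!![0, 1; -1, 0], by norm_num [Matrix.det_fin_two_of]⟩
def T₃ : SL2Z := ⟨!![1, 3; 0, 1], by norm_num [Matrix.det_fin_two_of]⟩

noncomputable def π : SL2Z →* PSL2Z := QuotientGroup.mk' (Subgroup.center SL2Z)

section Aux

open ModularGroup Subgroup

/-- `SL(2, ℤ)` is generated by `S` and `T`. -/
lemma aux_mem_closure_S_T (g : SL2Z) : g ∈ Subgroup.closure ({S, T} : Set SL2Z) := by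
  have hS : S ∈ Subgroup.closure ({S, T} : Set SL2Z) := subset_closure (by simp)
  have hT : T ∈ Subgroup.closure ({S, T} : Set SL2Z) := subset_closure (by simp)
  have key : ∀ m : ℕ, ∀ g : SL2Z, (g.1 1 0).natAbs = m →
      g ∈ Subgroup.closure ({S, T} : Set SL2Z) := by
    intro m
    induction m using Nat.strong_induction_on with
    | _ m ih =>
      intro g hg
      have hdet : g.1 0 0 * g.1 1 1 - g.1 0 1 * g.1 1 0 = 1 := by
        have h2 := g.2; rwa [Matrix.det_fin_two] at h2
      by_cases hc : g.1 1 0 = 0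
      · have had : g.1 0 0 * g.1 1 1 = 1 := by rw [hc] at hdet; linarith
        obtain ⟨b, hb⟩ : ∃ b, g.1 0 1 = b := ⟨_, rfl⟩
        rcases Int.mul_eq_one_iff_eq_one_or_neg_one.mp had with ⟨ha, hd⟩ | ⟨ha, hd⟩
        · have hM : g.1 = !![1, b; 0, 1] := by
            rw [Matrix.eta_fin_two g.1, ha, hd, hc, hb]
          have hgT : g = T ^ b := Subtype.ext (by rw [coe_T_zpow, hM])
          rw [hgT]; exact zpow_mem hT _
        · have hM : g.1 = !![-1, b; 0, -1] := by
            rw [Matrix.eta_fin_two g.1, ha, hd, hc, hb]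
          have hgT : g = S * S * T ^ (-b) := by
            apply Subtype.ext
            change g.1 = S.1 * S.1 * (T ^ (-b)).1
            rw [S_mul_S_eq,
              coe_T_zpow, hM, neg_one_mul]
            ext i j
            fin_cases i <;> fin_cases j <;> simp
          rw [hgT]; exact mul_mem (mul_mem hS hS) (zpow_mem hT _)
      · set n := -(g.1 0 0 / g.1 1 0) with hn
        have hent : (S * (T ^ n * g)).1 1 0 = g.1 0 0 % g.1 1 0 := by
          have h3 : (S * (T ^ n * g)).1 1 0 = g.1 0 0 + n * g.1 1 0 := by
            simp [SpecialLinearGroup.coe_mul, coe_S, coe_T_zpow, Matrix.mul_apply,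
              Matrix.vecMul, dotProduct, Fin.sum_univ_succ, Matrix.vecHead, Matrix.vecTail]
          rw [h3, hn, Int.emod_def]; ring
        have hlt : ((S * (T ^ n * g)).1 1 0).natAbs < m := by
          rw [hent, ← hg]
          have h1 := Int.emod_nonneg (g.1 0 0) hc
          have h2 : g.1 0 0 % |g.1 1 0| < |g.1 1 0| :=
            Int.emod_lt_of_pos _ (abs_pos.2 hc)
          rw [Int.emod_abs] at h2
          rcases abs_cases (g.1 1 0) with ⟨h3, _⟩ | ⟨h3, _⟩ <;> omega
        have h' := ih _ hlt _ rfl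
        have hgE : g = (T ^ n)⁻¹ * (S⁻¹ * (S * (T ^ n * g))) := by group
        rw [hgE]
        exact mul_mem (inv_mem (zpow_mem hT _)) (mul_mem (inv_mem hS) h')
  exact key _ g rfl

/-- Conjugation by `g` maps `closure s` into itself provided it maps `s` into `closure s`. -/
lemma aux_conj_mem_closure {G : Type*} [Group G] (g : G) (s : Set G)
    (hs : ∀ x ∈ s, g * x * g⁻¹ ∈ Subgroup.closure s) :
    ∀ h ∈ Subgroup.closure s, g * h * g⁻¹ ∈ Subgroup.closure s := by
  intro h hh
  have hmap : (Subgroup.closure s).map (MulAut.conj g).toMonoidHom ≤ Subgroup.closure s := by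
    rw [MonoidHom.map_closure]
    exact (Subgroup.closure_le _).2 (by rintro _ ⟨x, hx, rfl⟩; simpa using hs x hx)
  exact hmap ⟨h, hh, by simp⟩

-- Exact matrix identities in SL(2, ℤ).
lemma rel_S : S = γ₃ * γ₃ * γ₃ := by
  ext i j
  fin_cases i <;> fin_cases j <;>
    rfl

lemma rel_T3 : T ^ (3 : ℤ) = T₃ :=
  Subtype.ext (by rw [coe_T_zpow]; rfl)

lemma rel_sq₁ : γ₁ * γ₁ = γ₃ * γ₃ := by
  ext i j
  fin_cases i <;> fin_cases j <;>
    rfl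

lemma rel_sq₂ : γ₂ * γ₂ = γ₃ * γ₃ := by
  ext i j
  fin_cases i <;> fin_cases j <;>
    rfl

lemma rel_prod : γ₁ * γ₂ * γ₃ = T₃ := by
  ext i j
  fin_cases i <;> fin_cases j <;>
    rfl

lemma rel_c1 : T * γ₁ * T⁻¹ = γ₁ * γ₂ * γ₁ := by
  ext i j
  fin_cases i <;> fin_cases j <;>
    rfl

lemma rel_c2 : T * γ₂ * T⁻¹ = γ₁ * γ₃ * γ₁ := by
  ext i j
  fin_cases i <;> fin_cases j <;>
    rfl

lemma rel_c3 : T * γ₃ * T⁻¹ = γ₁ := by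
  ext i j
  fin_cases i <;> fin_cases j <;>
    rfl

lemma rel_d1 : T⁻¹ * γ₁ * T = γ₃ := by
  ext i j
  fin_cases i <;> fin_cases j <;>
    rfl

lemma rel_d2 : T⁻¹ * γ₂ * T = γ₃ * γ₁ * γ₃ := by
  ext i j
  fin_cases i <;> fin_cases j <;>
    rfl

lemma rel_d3 : T⁻¹ * γ₃ * T = γ₃ * γ₂ * γ₃ := by
  ext i j
  fin_cases i <;> fin_cases j <;>
    rfl

/-- `γ₃ * γ₃ = -1` is central. -/
lemma aux_sq_central : γ₃ * γ₃ ∈ Subgroup.center SL2Z := by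
  rw [Subgroup.mem_center_iff]
  intro g
  apply Subtype.ext
  have h : ((γ₃ * γ₃ : SL2Z) : Matrix (Fin 2) (Fin 2) ℤ) = -1 := by
    ext i j
    fin_cases i <;> fin_cases j <;> rfl
  change g.1 * (γ₃.1 * γ₃.1) = γ₃.1 * γ₃.1 * g.1
  change γ₃.1 * γ₃.1 = -1 at h
  rw [h, mul_neg_one, neg_one_mul]

lemma pi_sq : π (γ₃ * γ₃) = 1 := (QuotientGroup.eq_one_iff _).2 aux_sq_central

lemma pi_S : π S = π γ₃ := by
  rw [rel_S, _root_.map_mul, pi_sq, one_mul]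

/-- Every element of `PSL₂(ℤ)` lies in the closure of `{π γ₃, π T}`. -/
lemma aux_gen (x : PSL2Z) : x ∈ Subgroup.closure ({π γ₃, π T} : Set PSL2Z) := by
  obtain ⟨g, hg⟩ := QuotientGroup.mk'_surjective (Subgroup.center SL2Z) x
  have hx : π g = x := hg
  have h1 : π g ∈ Subgroup.map π (Subgroup.closure ({S, T} : Set SL2Z)) :=
    Subgroup.mem_map_of_mem π (aux_mem_closure_S_T g)
  rw [MonoidHom.map_closure, Set.image_insert_eq, Set.image_singleton, pi_S, hx] at h1
  exact h1

end Aux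

/-- In `PSL₂(ℤ)`, the subgroup generated by `γ₁, γ₂, γ₃` equals `Γ³`, the subgroup
generated by cubes of all elements; moreover `γ₁γ₂γ₃ = [[1,3],[0,1]]` and each `γᵢ`
has order `2` in `PSL₂(ℤ)`. -/
theorem stmt_10 :
    Subgroup.closure {π γ₁, π γ₂, π γ₃} =
      Subgroup.closure {x : PSL2Z | ∃ g : PSL2Z, x = g ^ 3} ∧
    γ₁ * γ₂ * γ₃ = T₃ ∧
    orderOf (π γ₁) = 2 ∧ orderOf (π γ₂) = 2 ∧ orderOf (π γ₃) = 2 := by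
  open ModularGroup Subgroup in
  set H : Subgroup PSL2Z := Subgroup.closure {π γ₁, π γ₂, π γ₃} with hH
  have hγ1 : π γ₁ ∈ H := subset_closure (by simp)
  have hγ2 : π γ₂ ∈ H := subset_closure (by simp)
  have hγ3 : π γ₃ ∈ H := subset_closure (by simp)
  -- squares are trivial
  have hsq : ∀ γ : SL2Z, γ * γ = γ₃ * γ₃ → (π γ) ^ 2 = 1 := by
    intro γ h
    rw [pow_two, ← _root_.map_mul, h, pi_sq]
  have hsq1 : (π γ₁) ^ 2 = 1 := hsq _ rel_sq₁
  have hsq2 : (π γ₂) ^ 2 = 1 := hsq _ rel_sq₂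
  have hsq3 : (π γ₃) ^ 2 = 1 := hsq _ rfl
  -- γᵢ is not central (doesn't commute with T)
  have hne : ∀ γ : SL2Z, (T * γ).1 0 0 ≠ (γ * T).1 0 0 → π γ ≠ 1 := by
    intro γ hcomm h
    have hc : γ ∈ Subgroup.center SL2Z := (QuotientGroup.eq_one_iff γ).1 h
    exact hcomm (congrArg (fun A : SL2Z => A.1 0 0) (Subgroup.mem_center_iff.1 hc T))
  have hne1 : π γ₁ ≠ 1 := by
    apply hne
    decide
  have hne2 : π γ₂ ≠ 1 := by
    apply hne
    decide
  have hne3 : π γ₃ ≠ 1 := by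
    apply hne
    decide
  -- conjugation of the generators by T and T⁻¹ stays in H
  have hconj : ∀ γ w : SL2Z, T * γ * T⁻¹ = w → π w ∈ H → π T * π γ * (π T)⁻¹ ∈ H := by
    intro γ w hrel hw
    rw [← _root_.map_inv, ← _root_.map_mul, ← _root_.map_mul, hrel]
    exact hw
  have hconj' : ∀ γ w : SL2Z, T⁻¹ * γ * T = w → π w ∈ H → (π T)⁻¹ * π γ * ((π T)⁻¹)⁻¹ ∈ H := by
    intro γ w hrel hw
    rw [inv_inv, ← _root_.map_inv, ← _root_.map_mul, ← _root_.map_mul, hrel]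
    exact hw
  have hmemset : ∀ x ∈ ({π γ₁, π γ₂, π γ₃} : Set PSL2Z),
      x = π γ₁ ∨ x = π γ₂ ∨ x = π γ₃ := by
    intro x hx
    simpa [Set.mem_insert_iff] using hx
  have hconjT : ∀ x ∈ ({π γ₁, π γ₂, π γ₃} : Set PSL2Z), π T * x * (π T)⁻¹ ∈ H := by
    intro x hx
    rcases hmemset x hx with rfl | rfl | rfl
    · exact hconj _ _ rel_c1 (mul_mem (mul_mem hγ1 hγ2) hγ1)
    · exact hconj _ _ rel_c2 (mul_mem (mul_mem hγ1 hγ3) hγ1)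
    · exact hconj _ _ rel_c3 hγ1
  have hconjT' : ∀ x ∈ ({π γ₁, π γ₂, π γ₃} : Set PSL2Z), (π T)⁻¹ * x * ((π T)⁻¹)⁻¹ ∈ H := by
    intro x hx
    rcases hmemset x hx with rfl | rfl | rfl
    · exact hconj' _ _ rel_d1 hγ3
    · exact hconj' _ _ rel_d2 (mul_mem (mul_mem hγ3 hγ1) hγ3)
    · exact hconj' _ _ rel_d3 (mul_mem (mul_mem hγ3 hγ2) hγ3)
  -- H is normal
  have hTnorm : π T ∈ Subgroup.normalizer (H : Set PSL2Z) := by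
    rw [Subgroup.mem_normalizer_iff]
    intro h
    constructor
    · intro hh
      exact aux_conj_mem_closure (π T) _ hconjT h hh
    · intro hh
      have h2 := aux_conj_mem_closure (π T)⁻¹ _ hconjT' _ hh
      simpa [mul_assoc] using h2
  have hnorm : H.Normal := by
    rw [← Subgroup.normalizer_eq_top_iff, eq_top_iff]
    intro x _
    refine (Subgroup.closure_le (Subgroup.normalizer (H : Set PSL2Z))).2 ?_ (aux_gen x)
    rintro y hy
    rcases (by simpa [Set.mem_insert_iff] using hy : y = π γ₃ ∨ y = π T) with rfl | rfl
    · exact Subgroup.le_normalizer hγ3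
    · exact hTnorm
  haveI := hnorm
  -- the quotient by H is generated by the image of T, which has order dividing 3
  have hcube : ∀ g : PSL2Z, g ^ 3 ∈ H := by
    intro g
    set q : PSL2Z →* PSL2Z ⧸ H := QuotientGroup.mk' H with hq
    have hqγ3 : q (π γ₃) = 1 := (QuotientGroup.eq_one_iff _).2 hγ3
    have hx : q g ∈ Subgroup.zpowers (q (π T)) := by
      have h1 : q g ∈ Subgroup.map q (Subgroup.closure ({π γ₃, π T} : Set PSL2Z)) :=
        Subgroup.mem_map_of_mem q (aux_gen g)
      rw [MonoidHom.map_closure, Set.image_insert_eq, Set.image_singleton] at h1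
      refine (Subgroup.closure_le _).2 ?_ h1
      rintro y hy
      rcases (by simpa [Set.mem_insert_iff] using hy : y = q (π γ₃) ∨ y = q (π T)) with rfl | rfl
      · rw [hqγ3]; exact one_mem _
      · exact Subgroup.mem_zpowers _
    obtain ⟨k, hk0⟩ := hx
    have hk : q (π T) ^ k = q g := hk0
    have hT3 : (q (π T)) ^ (3 : ℤ) = 1 := by
      rw [← _root_.map_zpow, ← _root_.map_zpow, rel_T3, ← rel_prod, _root_.map_mul, _root_.map_mul]
      exact (QuotientGroup.eq_one_iff _).2 (mul_mem (mul_mem hγ1 hγ2) hγ3)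
    have hq1 : q (g ^ 3) = 1 := by
      rw [_root_.map_pow, ← hk, ← _root_.zpow_natCast, ← _root_.zpow_mul, mul_comm,
        _root_.zpow_mul, Nat.cast_ofNat, hT3, _root_.one_zpow]
    exact (QuotientGroup.eq_one_iff _).1 hq1
  refine ⟨?_, rel_prod, ?_, ?_, ?_⟩
  · apply le_antisymm
    · refine (Subgroup.closure_le _).2 ?_
      intro y hy
      rcases hmemset y hy with rfl | rfl | rfl
      · exact subset_closure ⟨π γ₁, by rw [pow_succ, hsq1, one_mul]⟩
      · exact subset_closure ⟨π γ₂, by rw [pow_succ, hsq2, one_mul]⟩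
      · exact subset_closure ⟨π γ₃, by rw [pow_succ, hsq3, one_mul]⟩
    · refine (Subgroup.closure_le _).2 ?_
      rintro y ⟨g, rfl⟩
      exact hcube g
  · exact orderOf_eq_prime hsq1 hne1
  · exact orderOf_eq_prime hsq2 hne2
  · exact orderOf_eq_prime hsq3 hne3
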